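/- arXiv:1705.02216 — 4 statements merged into one kernel-verified Lean document; each statement's English description precedes it below -/
import Mathlib

section
/- Let $K_1, K_2, K_{12}, I_1, I_2, I_{12}$ be subspaces of a vector space $V$ with $I_{12} \subseteq I_1$, $I_{12} \subseteq I_2$, $I_1 \subseteq K_1$, $I_2 \subseteq K_2$, $K_1 \subseteq K_{12}$, $K_2 \subseteq K_{12}$. If the quotient $K_1/I_1$ is infinite dimensional, then at least one of the quotients $(K_1 \cap K_2)/I_{12}$ and $K_{12}/(I_1 + I_2)$ is infinite dimensional. -/
private lemma fd_of_submodule_quotient {K M : Type*} [Field K] [AddCommGroup M] [Module K M]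
    (S : Submodule K M) (h1 : FiniteDimensional K S) (h2 : FiniteDimensional K (M ⧸ S)) :
    FiniteDimensional K M := by
  rw [FiniteDimensional, ← Module.rank_lt_aleph0_iff] at *
  rw [← Submodule.rank_quotient_add_rank S]
  exact Cardinal.add_lt_aleph0 h2 h1

theorem stmt_0 {𝕜 V : Type*} [Field 𝕜] [AddCommGroup V] [Module 𝕜 V]
    (K1 K2 K12 I1 I2 I12 : Submodule 𝕜 V)
    (h1 : I12 ≤ I1) (h2 : I12 ≤ I2) (h3 : I1 ≤ K1) (h4 : I2 ≤ K2)
    (h5 : K1 ≤ K12) (h6 : K2 ≤ K12)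
    (hinf : ¬ FiniteDimensional 𝕜 (↥K1 ⧸ (I1.comap K1.subtype))) :
    ¬ FiniteDimensional 𝕜 (↥(K1 ⊓ K2) ⧸ (I12.comap (K1 ⊓ K2).subtype)) ∨
    ¬ FiniteDimensional 𝕜 (↥K12 ⧸ ((I1 ⊔ I2).comap K12.subtype)) := by
  by_contra hc
  push_neg at hc
  obtain ⟨hA, hB⟩ := hc
  apply hinf
  set N : Submodule 𝕜 ↥K1 := I1.comap K1.subtype with hN
  set P : Submodule 𝕜 ↥K1 := ((I1 ⊔ I2) ⊓ K1).comap K1.subtype with hP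
  have hNP : N ≤ P := fun x hx => ⟨le_sup_left (α := Submodule 𝕜 V) hx, x.2⟩
  -- Step 1 : K1 ⧸ P is finite dimensional
  have hfP : FiniteDimensional 𝕜 (↥K1 ⧸ P) := by
    set J : Submodule 𝕜 ↥K12 := (I1 ⊔ I2).comap K12.subtype with hJ
    set f0 : ↥K1 →ₗ[𝕜] ↥K12 ⧸ J := J.mkQ.comp (Submodule.inclusion h5) with hf0
    have hle : P ≤ LinearMap.ker f0 := by
      intro x hx
      simp only [hf0, LinearMap.mem_ker, LinearMap.comp_apply, Submodule.mkQ_apply,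
        Submodule.Quotient.mk_eq_zero]
      exact hx.1
    have hker : LinearMap.ker f0 ≤ P := by
      intro x hx
      simp only [hf0, LinearMap.mem_ker, LinearMap.comp_apply, Submodule.mkQ_apply,
        Submodule.Quotient.mk_eq_zero] at hx
      exact ⟨hx, x.2⟩
    exact FiniteDimensional.of_injective (P.liftQ f0 hle)
      (LinearMap.ker_eq_bot.mp (Submodule.ker_liftQ_eq_bot P f0 hle hker))
  -- the map from (K1 ⊓ K2)/I12 to K1/N
  set φ : ↥(K1 ⊓ K2) →ₗ[𝕜] ↥K1 ⧸ N :=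
    N.mkQ.comp (Submodule.inclusion inf_le_left) with hφ
  have hφle : I12.comap (K1 ⊓ K2).subtype ≤ LinearMap.ker φ := by
    intro x hx
    simp only [hφ, LinearMap.mem_ker, LinearMap.comp_apply, Submodule.mkQ_apply,
      Submodule.Quotient.mk_eq_zero]
    exact h1 hx
  set φ' := (I12.comap (K1 ⊓ K2).subtype).liftQ φ hφle with hφ'
  have hrange : FiniteDimensional 𝕜 (LinearMap.range φ') := inferInstance
  -- Step 2 : the image of P in K1 ⧸ N is finite dimensional
  have hS : P.map N.mkQ ≤ LinearMap.range φ' := by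
    rintro _ ⟨x, hx, rfl⟩
    obtain ⟨a, ha, b, hb, hab⟩ := Submodule.mem_sup.mp hx.1
    have hab' : a + b = (x : V) := hab
    have hbK1 : b ∈ K1 := by
      have : b = (x : V) - a := by rw [← hab']; abel
      rw [this]; exact sub_mem x.2 (h3 ha)
    refine ⟨Submodule.Quotient.mk ⟨b, hbK1, h4 hb⟩, ?_⟩
    rw [hφ', Submodule.liftQ_apply, hφ]
    simp only [LinearMap.comp_apply, Submodule.mkQ_apply]
    rw [Submodule.Quotient.eq]
    show (⟨b, hbK1⟩ : ↥K1) - x ∈ N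
    have : ((⟨b, hbK1⟩ : ↥K1) - x : ↥K1) = (⟨-a, neg_mem (h3 ha)⟩ : ↥K1) := by
      apply Subtype.ext
      show b - (x : V) = -a
      rw [← hab']; abel
    rw [this]
    exact neg_mem ha
  have hSfd : FiniteDimensional 𝕜 (P.map N.mkQ) :=
    Submodule.finiteDimensional_of_le hS
  -- Step 3 : quotient of quotient
  have hQfd : FiniteDimensional 𝕜 ((↥K1 ⧸ N) ⧸ P.map N.mkQ) :=
    (Submodule.quotientQuotientEquivQuotient N P hNP).symm.finiteDimensional
  exact fd_of_submodule_quotient _ hSfd hQfd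
end

section
/- Let $K_1, K_2, K_{12}, I_1, I_2, I_{12}$ be subspaces of a vector space $V$ with $I_{12} \subseteq I_1 \subseteq K_1 \subseteq K_{12}$ and $I_{12} \subseteq I_2 \subseteq K_2 \subseteq K_{12}$. If both $(K_1 \cap K_2)/I_{12}$ and $K_{12}/(I_1 + I_2)$ are finite dimensional, then $K_1/I_1$ is finite dimensional. -/
theorem stmt_3 {𝕜 V : Type*} [Field 𝕜] [AddCommGroup V] [Module 𝕜 V]
    (K1 K2 K12 I1 I2 I12 : Submodule 𝕜 V)
    (h1 : I12 ≤ I1) (h2 : I1 ≤ K1) (h3 : K1 ≤ K12)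
    (h4 : I12 ≤ I2) (h5 : I2 ≤ K2) (h6 : K2 ≤ K12)
    (hfd1 : FiniteDimensional 𝕜 (↥(K1 ⊓ K2) ⧸ (I12.comap (K1 ⊓ K2).subtype)))
    (hfd2 : FiniteDimensional 𝕜 (↥K12 ⧸ ((I1 ⊔ I2).comap K12.subtype))) :
    FiniteDimensional 𝕜 (↥K1 ⧸ (I1.comap K1.subtype)) := by
  set J1 : Submodule 𝕜 K1 := I1.comap K1.subtype
  -- map from K1 ⊓ K2 into K1 ⧸ J1
  let f : ↥(K1 ⊓ K2) →ₗ[𝕜] ↥K1 ⧸ J1 :=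
    J1.mkQ.comp (Submodule.inclusion inf_le_left)
  have hker1 : I12.comap (K1 ⊓ K2).subtype ≤ LinearMap.ker f := by
    intro x hx
    simp only [LinearMap.mem_ker, f, LinearMap.comp_apply, Submodule.mkQ_apply,
      Submodule.Quotient.mk_eq_zero]
    exact h1 hx
  let f' := Submodule.liftQ _ f hker1
  -- S is finite dimensional, being the image of a f.d. space
  let S := LinearMap.range f'
  have hS : FiniteDimensional 𝕜 S := Module.Finite.range f'
  -- map from K1 ⧸ J1 to K12 ⧸ (I1 ⊔ I2)
  let g0 : ↥K1 →ₗ[𝕜] ↥K12 ⧸ ((I1 ⊔ I2).comap K12.subtype) :=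
    ((I1 ⊔ I2).comap K12.subtype).mkQ.comp (Submodule.inclusion h3)
  have hker2 : J1 ≤ LinearMap.ker g0 := by
    intro x hx
    simp only [LinearMap.mem_ker, g0, LinearMap.comp_apply, Submodule.mkQ_apply,
      Submodule.Quotient.mk_eq_zero]
    exact le_sup_left (α := Submodule 𝕜 V) hx
  let g := Submodule.liftQ _ g0 hker2
  -- ker g ≤ S
  have hkerS : LinearMap.ker g ≤ S := by
    intro x hx
    obtain ⟨v, rfl⟩ := Submodule.mkQ_surjective J1 x
    simp only [LinearMap.mem_ker, Submodule.mkQ_apply, g, Submodule.liftQ_apply] at hx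
    have hv : (v : V) ∈ I1 ⊔ I2 := by
      simpa only [g0, LinearMap.comp_apply, Submodule.mkQ_apply,
        Submodule.Quotient.mk_eq_zero, Submodule.mem_comap, Submodule.subtype_apply,
        Submodule.coe_inclusion] using hx
    obtain ⟨a, ha, b, hb, hab⟩ := Submodule.mem_sup.mp hv
    have hbK : b ∈ K1 ⊓ K2 := by
      refine ⟨?_, h5 hb⟩
      have : b = (v : V) - a := by rw [← hab]; abel
      rw [this]; exact sub_mem v.2 (h2 ha)
    refine ⟨Submodule.Quotient.mk ⟨b, hbK⟩, ?_⟩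
    have : f' (Submodule.Quotient.mk ⟨b, hbK⟩) = Submodule.Quotient.mk ⟨b, hbK.1⟩ := rfl
    rw [this, Submodule.mkQ_apply, Submodule.Quotient.eq]
    show (⟨b, hbK.1⟩ : K1) - v ∈ J1
    have : (⟨b, hbK.1⟩ : K1) - v = -(⟨a, h2 ha⟩ : K1) := by
      ext; simp [← hab]
    rw [this]
    exact neg_mem ha
  -- ker g is f.d.
  have hker_fd : FiniteDimensional 𝕜 (LinearMap.ker g) :=
    Submodule.finiteDimensional_of_le hkerS
  -- quotient by ker g is f.d. : it embeds in the f.d. target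
  have hquot_fd : FiniteDimensional 𝕜 ((↥K1 ⧸ J1) ⧸ LinearMap.ker g) := by
    have := (LinearMap.quotKerEquivRange g).symm
    exact Module.Finite.equiv (LinearMap.quotKerEquivRange g).symm
  -- conclude via extension
  have h := Submodule.fg_of_fg_map_of_fg_inf_ker (LinearMap.ker g).mkQ
    (s := (⊤ : Submodule 𝕜 (↥K1 ⧸ J1))) ?_ ?_
  · exact Module.finite_def.mpr h
  · rw [Submodule.map_top, Submodule.range_mkQ]
    exact Module.finite_def.mp hquot_fd
  · rw [top_inf_eq, Submodule.ker_mkQ]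
    exact (Submodule.fg_iff_finiteDimensional _).mpr hker_fd
end

section
/- Let $\partial, \bar\partial$ be anticommuting differentials on a vector space $\Omega$ with $\partial^2 = \bar\partial^2 = 0$ and $\partial\bar\partial = -\bar\partial\partial$. Define the Dolbeault quotient $H_{\bar\partial} = \ker\bar\partial / \mathrm{im}\,\bar\partial$, the Bott-Chern quotient $H_{BC} = (\ker\partial \cap \ker\bar\partial)/\mathrm{im}(\partial\bar\partial)$, and the Aeppli quotient $H_A = \ker(\partial\bar\partial)/(\mathrm{im}\,\partial + \mathrm{im}\,\bar\partial)$. If $H_{\bar\partial}$ is infinite dimensional, then $H_{BC}$ or $H_A$ is infinite dimensional. -/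
theorem stmt_16 {𝕜 Ω : Type*} [Field 𝕜] [AddCommGroup Ω] [Module 𝕜 Ω]
    (p q : Ω →ₗ[𝕜] Ω)
    (hp : p ∘ₗ p = 0) (hq : q ∘ₗ q = 0) (hpq : p ∘ₗ q = -(q ∘ₗ p))
    (hinf : ¬ FiniteDimensional 𝕜
      (↥(LinearMap.ker q) ⧸
        ((LinearMap.range q).comap (LinearMap.ker q).subtype))) :
    ¬ FiniteDimensional 𝕜
      (↥(LinearMap.ker p ⊓ LinearMap.ker q) ⧸
        ((LinearMap.range (p ∘ₗ q)).comap (LinearMap.ker p ⊓ LinearMap.ker q).subtype)) ∨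
    ¬ FiniteDimensional 𝕜
      (↥(LinearMap.ker (p ∘ₗ q)) ⧸
        ((LinearMap.range p ⊔ LinearMap.range q).comap (LinearMap.ker (p ∘ₗ q)).subtype)) := by
  by_contra hcon
  push_neg at hcon
  obtain ⟨hBC, hA⟩ := hcon
  apply hinf
  set Kq := LinearMap.ker q with hKq
  set Kpq := LinearMap.ker p ⊓ LinearMap.ker q with hKpq
  set Kd := LinearMap.ker (p ∘ₗ q) with hKd
  set S : Submodule 𝕜 Kq := (LinearMap.range q).comap Kq.subtype with hS
  set T : Submodule 𝕜 Kq :=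
    (LinearMap.range p ⊔ LinearMap.range q).comap Kq.subtype with hT
  have hST : S ≤ T := Submodule.comap_mono le_sup_right
  -- inclusion ker q ≤ ker (p ∘ q)
  have hincl : Kq ≤ Kd := by
    intro x hx
    simp only [hKd, LinearMap.mem_ker, LinearMap.comp_apply]
    rw [hKq, LinearMap.mem_ker] at hx
    rw [hx, map_zero]
  -- Step 1: Kq ⧸ T embeds into Kd ⧸ A, hence finite dimensional
  set A : Submodule 𝕜 Kd :=
    (LinearMap.range p ⊔ LinearMap.range q).comap Kd.subtype with hA'
  let g0 : Kq →ₗ[𝕜] (Kd ⧸ A) := A.mkQ ∘ₗ Submodule.inclusion hincl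
  have hker_g0 : LinearMap.ker g0 = T := by
    ext x
    simp [g0, T, A, Submodule.Quotient.mk_eq_zero, Submodule.inclusion]
  let g : (Kq ⧸ T) →ₗ[𝕜] (Kd ⧸ A) := Submodule.liftQ T g0 hker_g0.ge
  have hginj : Function.Injective g := by
    rw [← LinearMap.ker_eq_bot]
    exact Submodule.ker_liftQ_eq_bot T g0 hker_g0.ge hker_g0.le
  haveI hQT : FiniteDimensional 𝕜 (Kq ⧸ T) := FiniteDimensional.of_injective g hginj
  -- Step 2: the map from the Bott-Chern quotient to Kq ⧸ S
  let f0 : Kpq →ₗ[𝕜] (Kq ⧸ S) := S.mkQ ∘ₗ Submodule.inclusion inf_le_right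
  set R : Submodule 𝕜 Kpq :=
    (LinearMap.range (p ∘ₗ q)).comap Kpq.subtype with hR
  have hRf : R ≤ LinearMap.ker f0 := by
    rintro ⟨x, hx⟩ hxR
    simp only [hR, Submodule.mem_comap, LinearMap.mem_range] at hxR
    obtain ⟨a, ha⟩ := hxR
    simp only [LinearMap.mem_ker, f0, LinearMap.comp_apply, Submodule.mkQ_apply,
      Submodule.Quotient.mk_eq_zero]
    have hx' : x = q (-(p a)) := by
      have h2 := congrFun (congrArg DFunLike.coe hpq) a
      simp only [LinearMap.comp_apply, LinearMap.neg_apply] at h2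
      have ha' : p (q a) = x := ha
      rw [map_neg, ← h2, ha']
    simp only [hS, Submodule.mem_comap, LinearMap.mem_range]
    exact ⟨-(p a), hx'.symm⟩
  let f : (Kpq ⧸ R) →ₗ[𝕜] (Kq ⧸ S) := Submodule.liftQ R f0 hRf
  -- Step 3: T.map S.mkQ ≤ range f
  have hTle : T.map S.mkQ ≤ LinearMap.range f := by
    rintro _ ⟨⟨x, hxq⟩, hxT, rfl⟩
    have hx2 : x ∈ LinearMap.range p ⊔ LinearMap.range q := hxT
    rw [Submodule.mem_sup] at hx2
    obtain ⟨y, hy, z, hz, hxyz⟩ := hx2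
    obtain ⟨a, rfl⟩ := hy
    obtain ⟨b, rfl⟩ := hz
    have hpa_p : p (p a) = 0 := congrFun (congrArg DFunLike.coe hp) a
    have hpa_q : q (p a) = 0 := by
      have h1 : q x = 0 := hxq
      have h2 : q (q b) = 0 := congrFun (congrArg DFunLike.coe hq) b
      have : q (p a) = q x - q (q b) := by rw [← map_sub]; congr 1; rw [← hxyz]; abel
      rw [this, h1, h2, sub_zero]
    have hpa : p a ∈ Kpq := ⟨hpa_p, hpa_q⟩
    refine ⟨Submodule.Quotient.mk ⟨p a, hpa⟩, ?_⟩
    show f0 ⟨p a, hpa⟩ = _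
    simp only [f0, LinearMap.comp_apply, Submodule.mkQ_apply]
    rw [Submodule.Quotient.eq]
    simp only [hS, Submodule.mem_comap, LinearMap.mem_range]
    refine ⟨-b, ?_⟩
    simp only [Submodule.coe_subtype, map_neg]
    show -(q b) = _
    have hc : ((Submodule.inclusion (inf_le_right : Kpq ≤ Kq) ⟨p a, hpa⟩
        - (⟨x, hxq⟩ : Kq) : Kq) : Ω) = p a - x := rfl
    rw [hc, ← hxyz]; abel
  haveI : FiniteDimensional 𝕜 (LinearMap.range f) := inferInstance
  haveI hN : FiniteDimensional 𝕜 (T.map S.mkQ) :=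
    Submodule.finiteDimensional_of_le hTle
  -- Step 4: put things together
  haveI hQQ : FiniteDimensional 𝕜 ((Kq ⧸ S) ⧸ T.map S.mkQ) :=
    LinearEquiv.finiteDimensional (Submodule.quotientQuotientEquivQuotient S T hST).symm
  have htop : (⊤ : Submodule 𝕜 (Kq ⧸ S)).FG := by
    apply Submodule.fg_of_fg_map_of_fg_inf_ker (T.map S.mkQ).mkQ
    · rw [Submodule.map_top, Submodule.range_mkQ]
      exact Module.finite_def.mp hQQ
    · rw [top_inf_eq, Submodule.ker_mkQ]
      exact (Submodule.fg_iff_finiteDimensional _).mpr hN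
  exact Module.finite_def.mpr htop
end

section
/- Let $d, d^\Lambda$ be linear endomorphisms of a vector space $\Omega$ with $d^2 = 0$, $(d^\Lambda)^2 = 0$, and $d d^\Lambda + d^\Lambda d = 0$. Define $H_d = \ker d/\mathrm{im}\,d$, $H_{d+d^\Lambda} = (\ker d \cap \ker d^\Lambda)/\mathrm{im}(d d^\Lambda)$, and $H_{dd^\Lambda} = \ker(d d^\Lambda)/(\mathrm{im}\,d + \mathrm{im}\,d^\Lambda)$. If $H_d$ is infinite dimensional then $H_{d+d^\Lambda}$ or $H_{dd^\Lambda}$ is infinite dimensional. -/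
theorem stmt_17 {𝕜 Ω : Type*} [Field 𝕜] [AddCommGroup Ω] [Module 𝕜 Ω]
    (d dΛ : Ω →ₗ[𝕜] Ω)
    (hd : d ∘ₗ d = 0) (hdΛ : dΛ ∘ₗ dΛ = 0) (hanti : d ∘ₗ dΛ + dΛ ∘ₗ d = 0)
    (hinf : ¬ FiniteDimensional 𝕜
      (↥(LinearMap.ker d) ⧸
        ((LinearMap.range d).comap (LinearMap.ker d).subtype))) :
    ¬ FiniteDimensional 𝕜
      (↥(LinearMap.ker d ⊓ LinearMap.ker dΛ) ⧸
        ((LinearMap.range (d ∘ₗ dΛ)).comap (LinearMap.ker d ⊓ LinearMap.ker dΛ).subtype)) ∨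
    ¬ FiniteDimensional 𝕜
      (↥(LinearMap.ker (d ∘ₗ dΛ)) ⧸
        ((LinearMap.range d ⊔ LinearMap.range dΛ).comap (LinearMap.ker (d ∘ₗ dΛ)).subtype)) := by
  by_contra h
  push_neg at h
  obtain ⟨hBC, hA⟩ := h
  apply hinf
  -- pointwise consequences of the hypotheses
  have hdd : ∀ x, d (d x) = 0 := fun x => congrFun (congrArg DFunLike.coe hd) x
  have hdΛdΛ : ∀ x, dΛ (dΛ x) = 0 := fun x => congrFun (congrArg DFunLike.coe hdΛ) x
  have hac : ∀ x, d (dΛ x) + dΛ (d x) = 0 := fun x =>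
    congrFun (congrArg DFunLike.coe hanti) x
  set N₂ := (LinearMap.range d).comap (LinearMap.ker d).subtype with hN₂
  set B := LinearMap.ker d ⊓ LinearMap.ker dΛ with hB
  set N₁ := (LinearMap.range (d ∘ₗ dΛ)).comap B.subtype with hN₁
  set Kd := LinearMap.ker (d ∘ₗ dΛ) with hKd
  set N₃ := (LinearMap.range d ⊔ LinearMap.range dΛ).comap Kd.subtype with hN₃
  have hKle : LinearMap.ker d ≤ Kd := by
    intro x hx
    simp only [LinearMap.mem_ker] at hx
    have := hac x
    rw [hx, map_zero, add_zero] at this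
    simpa only [hKd, LinearMap.mem_ker, LinearMap.comp_apply] using this
  -- the map ψ : H_BC → H_d
  have hψker : N₁ ≤ LinearMap.ker (N₂.mkQ ∘ₗ Submodule.inclusion (inf_le_left : B ≤ LinearMap.ker d)) := by
    intro x hx
    simp only [hN₁, Submodule.mem_comap, LinearMap.mem_range] at hx
    obtain ⟨y, hy⟩ := hx
    simp only [LinearMap.mem_ker, LinearMap.comp_apply, Submodule.mkQ_apply]
    rw [Submodule.Quotient.mk_eq_zero]
    simp only [hN₂, Submodule.mem_comap, LinearMap.mem_range]
    exact ⟨dΛ y, by simpa [LinearMap.comp_apply] using hy⟩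
  set ψ := N₁.liftQ (N₂.mkQ ∘ₗ Submodule.inclusion (inf_le_left : B ≤ LinearMap.ker d)) hψker
    with hψ
  -- the map φ : H_d → H_A
  have hφker : N₂ ≤ LinearMap.ker (N₃.mkQ ∘ₗ Submodule.inclusion hKle) := by
    intro x hx
    simp only [hN₂, Submodule.mem_comap, LinearMap.mem_range] at hx
    simp only [LinearMap.mem_ker, LinearMap.comp_apply, Submodule.mkQ_apply,
      Submodule.Quotient.mk_eq_zero]
    simp only [hN₃, Submodule.mem_comap]
    exact Submodule.mem_sup_left hx
  set φ := N₂.liftQ (N₃.mkQ ∘ₗ Submodule.inclusion hKle) hφker with hφ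
  -- kernel of φ is contained in range of ψ
  have hkr : LinearMap.ker φ ≤ LinearMap.range ψ := by
    intro q hq
    obtain ⟨x, rfl⟩ := Submodule.Quotient.mk_surjective N₂ q
    simp only [LinearMap.mem_ker] at hq
    rw [hφ, Submodule.liftQ_apply, LinearMap.comp_apply, Submodule.mkQ_apply,
      Submodule.Quotient.mk_eq_zero] at hq
    simp only [hN₃, Submodule.mem_comap] at hq
    rw [Submodule.mem_sup] at hq
    obtain ⟨a, ha, b, hb, hab⟩ := hq
    obtain ⟨u, rfl⟩ := ha
    obtain ⟨v, rfl⟩ := hb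
    have hab' : d u + dΛ v = (x : Ω) := by rw [hab]; rfl
    have hx0 : d (x : Ω) = 0 := x.2
    have hzd : d (dΛ v) = 0 := by
      have : d (d u + dΛ v) = 0 := by rw [hab', hx0]
      rw [map_add, hdd u, zero_add] at this
      exact this
    have hz : dΛ v ∈ B := ⟨hzd, hdΛdΛ v⟩
    refine ⟨Submodule.Quotient.mk ⟨dΛ v, hz⟩, ?_⟩
    rw [hψ, Submodule.liftQ_apply, LinearMap.comp_apply, Submodule.mkQ_apply,
      Submodule.Quotient.eq]
    simp only [hN₂, Submodule.mem_comap]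
    refine ⟨-u, ?_⟩
    have hcoe : ((Submodule.inclusion (inf_le_left : B ≤ LinearMap.ker d) ⟨dΛ v, hz⟩ - x :
        ↥(LinearMap.ker d)) : Ω) = dΛ v - (x : Ω) := rfl
    rw [map_neg, Submodule.coe_subtype, hcoe, ← hab']
    abel
  -- deduce finite-dimensionality
  haveI : FiniteDimensional 𝕜 ↥(LinearMap.range ψ) := inferInstance
  haveI hkfd : FiniteDimensional 𝕜 ↥(LinearMap.ker φ) :=
    Submodule.finiteDimensional_of_le hkr
  haveI : FiniteDimensional 𝕜 ↥(LinearMap.range φ) := inferInstance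
  haveI hqfd : FiniteDimensional 𝕜
      ((↥(LinearMap.ker d) ⧸ N₂) ⧸ LinearMap.ker φ) :=
    LinearEquiv.finiteDimensional φ.quotKerEquivRange.symm
  have hrank := Submodule.rank_quotient_add_rank (LinearMap.ker φ)
  have h1 : Module.rank 𝕜 ((↥(LinearMap.ker d) ⧸ N₂) ⧸ LinearMap.ker φ) < Cardinal.aleph0 :=
    Module.rank_lt_aleph0 𝕜 _
  have h2 : Module.rank 𝕜 ↥(LinearMap.ker φ) < Cardinal.aleph0 := Module.rank_lt_aleph0 𝕜 _
  have : Module.rank 𝕜 (↥(LinearMap.ker d) ⧸ N₂) < Cardinal.aleph0 := by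
    rw [← hrank]
    exact Cardinal.add_lt_aleph0 h1 h2
  exact (Module.rank_lt_aleph0_iff).mp this
end
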